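/- Let m ≥ 1 and let D > 0, V > 0, a > 0, b > 0, K₁ > 0, K₂ > 0, t₁ > 0, t₂ > 0, τ₁ > 0, τ₂ > 0 be real numbers. If D ≤ K₁·a^{t₁}·V^{(1 − t₁τ₁)/m} and D ≤ K₂·b^{t₂}·V^{(1 − t₂τ₂)/m}, then D ≤ max{K₁,K₂}·(a·b)^{t}·V^{(1 − t(τ₁+τ₂))/m}, where t = t₁t₂/(t₁ + t₂). -/

import Mathlib

/-- if `D ≤ K₁ a^{t₁} V^{(1 - t₁τ₁)/m}` and `D ≤ K₂ b^{t₂} V^{(1 - t₂τ₂)/m}`,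
then `D ≤ max{K₁,K₂} (ab)^t V^{(1 - t(τ₁+τ₂))/m}` with `t = t₁t₂/(t₁+t₂)`. -/
theorem product_constraint_diam_bound (m : ℕ) (hm : 1 ≤ m)
    (D V a b K₁ K₂ t₁ t₂ τ₁ τ₂ : ℝ)
    (hD : 0 < D) (hV : 0 < V) (ha : 0 < a) (hb : 0 < b)
    (hK₁ : 0 < K₁) (hK₂ : 0 < K₂) (ht₁ : 0 < t₁) (ht₂ : 0 < t₂)
    (hτ₁ : 0 < τ₁) (hτ₂ : 0 < τ₂)
    (h₁ : D ≤ K₁ * a ^ t₁ * V ^ ((1 - t₁ * τ₁) / m))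
    (h₂ : D ≤ K₂ * b ^ t₂ * V ^ ((1 - t₂ * τ₂) / m)) :
    D ≤ max K₁ K₂ * (a * b) ^ (t₁ * t₂ / (t₁ + t₂)) *
      V ^ ((1 - (t₁ * t₂ / (t₁ + t₂)) * (τ₁ + τ₂)) / m) := by
  have hm' : (0:ℝ) < m := by exact_mod_cast hm
  have hs : (0:ℝ) < t₁ + t₂ := by linarith
  set θ₁ : ℝ := t₂ / (t₁ + t₂) with hθ₁
  set θ₂ : ℝ := t₁ / (t₁ + t₂) with hθ₂
  have hθ₁pos : 0 < θ₁ := div_pos ht₂ hs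
  have hθ₂pos : 0 < θ₂ := div_pos ht₁ hs
  have hθsum : θ₁ + θ₂ = 1 := by
    rw [hθ₁, hθ₂, ← add_div, add_comm t₂ t₁, div_self hs.ne']
  set e₁ : ℝ := (1 - t₁ * τ₁) / m with he₁
  set e₂ : ℝ := (1 - t₂ * τ₂) / m with he₂
  have hR₁ : 0 < K₁ * a ^ t₁ * V ^ e₁ :=
    mul_pos (mul_pos hK₁ (Real.rpow_pos_of_pos ha _)) (Real.rpow_pos_of_pos hV _)
  have hR₂ : 0 < K₂ * b ^ t₂ * V ^ e₂ :=
    mul_pos (mul_pos hK₂ (Real.rpow_pos_of_pos hb _)) (Real.rpow_pos_of_pos hV _)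
  have key : D ≤ (K₁ * a ^ t₁ * V ^ e₁) ^ θ₁ * (K₂ * b ^ t₂ * V ^ e₂) ^ θ₂ := by
    calc D = D ^ θ₁ * D ^ θ₂ := by
            rw [← Real.rpow_add hD, hθsum, Real.rpow_one]
      _ ≤ (K₁ * a ^ t₁ * V ^ e₁) ^ θ₁ * (K₂ * b ^ t₂ * V ^ e₂) ^ θ₂ := by
            exact mul_le_mul (Real.rpow_le_rpow hD.le h₁ hθ₁pos.le)
              (Real.rpow_le_rpow hD.le h₂ hθ₂pos.le)
              (Real.rpow_nonneg hD.le _) (Real.rpow_nonneg hR₁.le _)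
  have expand : (K₁ * a ^ t₁ * V ^ e₁) ^ θ₁ * (K₂ * b ^ t₂ * V ^ e₂) ^ θ₂
      = (K₁ ^ θ₁ * K₂ ^ θ₂) * (a ^ (t₁ * θ₁) * b ^ (t₂ * θ₂)) * V ^ (e₁ * θ₁ + e₂ * θ₂) := by
    rw [Real.mul_rpow (by positivity) (by positivity),
        Real.mul_rpow (by positivity) (by positivity),
        Real.mul_rpow (by positivity) (by positivity),
        Real.mul_rpow (by positivity) (by positivity),
        ← Real.rpow_mul ha.le, ← Real.rpow_mul hb.le,
        ← Real.rpow_mul hV.le, ← Real.rpow_mul hV.le,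
        Real.rpow_add hV]
    ring
  have hKle : K₁ ^ θ₁ * K₂ ^ θ₂ ≤ max K₁ K₂ := by
    have h1 : K₁ ^ θ₁ ≤ (max K₁ K₂) ^ θ₁ :=
      Real.rpow_le_rpow hK₁.le (le_max_left _ _) hθ₁pos.le
    have h2 : K₂ ^ θ₂ ≤ (max K₁ K₂) ^ θ₂ :=
      Real.rpow_le_rpow hK₂.le (le_max_right _ _) hθ₂pos.le
    calc K₁ ^ θ₁ * K₂ ^ θ₂ ≤ (max K₁ K₂) ^ θ₁ * (max K₁ K₂) ^ θ₂ := by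
          apply mul_le_mul h1 h2 (Real.rpow_nonneg hK₂.le _) (Real.rpow_nonneg (le_max_of_le_left hK₁.le) _)
      _ = max K₁ K₂ := by
          rw [← Real.rpow_add (lt_max_of_lt_left hK₁), hθsum, Real.rpow_one]
  have ht₁θ : t₁ * θ₁ = t₁ * t₂ / (t₁ + t₂) := by rw [hθ₁]; ring
  have ht₂θ : t₂ * θ₂ = t₁ * t₂ / (t₁ + t₂) := by rw [hθ₂]; ring
  have hexpV : e₁ * θ₁ + e₂ * θ₂ = (1 - (t₁ * t₂ / (t₁ + t₂)) * (τ₁ + τ₂)) / m := by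
    rw [he₁, he₂, hθ₁, hθ₂]
    field_simp
    ring
  have hab : a ^ (t₁ * θ₁) * b ^ (t₂ * θ₂) = (a * b) ^ (t₁ * t₂ / (t₁ + t₂)) := by
    rw [ht₁θ, ht₂θ, Real.mul_rpow ha.le hb.le]
  calc D ≤ (K₁ * a ^ t₁ * V ^ e₁) ^ θ₁ * (K₂ * b ^ t₂ * V ^ e₂) ^ θ₂ := key
    _ = (K₁ ^ θ₁ * K₂ ^ θ₂) * (a ^ (t₁ * θ₁) * b ^ (t₂ * θ₂)) * V ^ (e₁ * θ₁ + e₂ * θ₂) := expand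
    _ ≤ max K₁ K₂ * (a * b) ^ (t₁ * t₂ / (t₁ + t₂)) *
        V ^ ((1 - (t₁ * t₂ / (t₁ + t₂)) * (τ₁ + τ₂)) / m) := by
        rw [hab, hexpV]
        exact mul_le_mul_of_nonneg_right
          (mul_le_mul_of_nonneg_right hKle (by positivity)) (by positivity)
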